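/- The closed unit disk {p ∈ ℝ² : ‖p‖ ≤ 1} admits a proper 7-coloring in which six congruent 60° sectors (excluding the center) receive six distinct colors and the center receives a seventh color: any two points at Euclidean distance exactly 1 receive distinct colors. -/

import Mathlib

lemma cos_gt_half_of_abs_lt {x : ℝ} (hx : |x| < Real.pi / 3) : 1/2 < Real.cos x := by
  rw [← Real.cos_abs, ← Real.cos_pi_div_three]
  exact Real.cos_lt_cos_of_nonneg_of_le_pi (abs_nonneg x)
    (by linarith [Real.pi_pos]) hx

lemma re_eq (p : ℂ) : p.re = ‖p‖ * Real.cos p.arg := by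
  exact (Complex.norm_mul_cos_arg p).symm

lemma im_eq (p : ℂ) : p.im = ‖p‖ * Real.sin p.arg := by
  exact (Complex.norm_mul_sin_arg p).symm

lemma norm_sub_sq_eq (p q : ℂ) :
    ‖p - q‖^2 = ‖p‖^2 + ‖q‖^2 - 2*‖p‖*‖q‖*Real.cos (p.arg - q.arg) := by
  have h1 : ‖p - q‖^2 = (p.re - q.re)^2 + (p.im - q.im)^2 := by
    rw [Complex.sq_norm, Complex.normSq_apply]
    simp [Complex.sub_re, Complex.sub_im]; ring
  rw [h1, re_eq p, re_eq q, im_eq p, im_eq q, Real.cos_sub]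
  have hp := Real.sin_sq_add_cos_sq p.arg
  have hq := Real.sin_sq_add_cos_sq q.arg
  nlinarith [hp, hq]

/-- The closed unit disk admits a proper 7-coloring in which the six half-open 60° sectors
get six distinct colors and the center gets a seventh color. -/
theorem unit_disk_seven_coloring :
    ∃ c : ℂ → Fin 7,
      (∀ p q : ℂ, ‖p‖ ≤ 1 → ‖q‖ ≤ 1 → ‖p - q‖ = 1 → c p ≠ c q) ∧
      c 0 = 6 ∧
      ∀ p : ℂ, p ≠ 0 →
        (c p : ℕ) = (⌊(p.arg + Real.pi) / (Real.pi / 3)⌋).toNat % 6 := by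
  have pi_pos := Real.pi_pos
  set c : ℂ → Fin 7 := fun p =>
    if p = 0 then 6 else ⟨(⌊(p.arg + Real.pi) / (Real.pi / 3)⌋).toNat % 6, by omega⟩ with hc
  -- basic facts about the sector index
  have hfloor : ∀ p : ℂ, p ≠ 0 →
      (0 : ℝ) < (p.arg + Real.pi) / (Real.pi / 3) ∧ (p.arg + Real.pi) / (Real.pi / 3) ≤ 6 := by
    intro p _
    have h1 := Complex.neg_pi_lt_arg p
    have h2 := Complex.arg_le_pi p
    constructor
    · apply div_pos (by linarith) (by linarith)
    · rw [div_le_iff₀ (by linarith)]; linarith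
  refine ⟨c, ?_, by simp [hc], fun p hp => by simp [hc, hp]⟩
  intro p q hp hq hpq hcontra
  -- key distance fact when both nonzero with close angles
  by_cases hp0 : p = 0
  · subst hp0
    have hq0 : q ≠ 0 := by
      intro h; subst h; simp at hpq
    simp [hc, hq0] at hcontra
    have := congrArg Fin.val hcontra
    simp at this
    omega
  · by_cases hq0 : q = 0
    · subst hq0
      simp [hc, hp0] at hcontra
      have := congrArg Fin.val hcontra
      simp at this
      omega
    · -- both nonzero
      simp [hc, hp0, hq0] at hcontra
      have heq : (⌊(p.arg + Real.pi) / (Real.pi / 3)⌋).toNat % 6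
          = (⌊(q.arg + Real.pi) / (Real.pi / 3)⌋).toNat % 6 := hcontra
      set t := (p.arg + Real.pi) / (Real.pi / 3) with ht
      set u := (q.arg + Real.pi) / (Real.pi / 3) with hu
      obtain ⟨ht0, ht6⟩ := hfloor p hp0
      obtain ⟨hu0, hu6⟩ := hfloor q hq0
      have hft0 : 0 ≤ ⌊t⌋ := Int.floor_nonneg.mpr (le_of_lt ht0)
      have hft6 : ⌊t⌋ ≤ 6 := by
        have := Int.floor_le_floor ht6
        simpa using this
      have hfu0 : 0 ≤ ⌊u⌋ := Int.floor_nonneg.mpr (le_of_lt hu0)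
      have hfu6 : ⌊u⌋ ≤ 6 := by
        have := Int.floor_le_floor hu6
        simpa using this
      -- angles
      have harg : t * (Real.pi / 3) = p.arg + Real.pi := by
        rw [ht, div_mul_cancel₀ _ (by positivity)]
      have harg' : u * (Real.pi / 3) = q.arg + Real.pi := by
        rw [hu, div_mul_cancel₀ _ (by positivity)]
      -- get cos (arg p - arg q) > 1/2
      have hcos : 1/2 < Real.cos (p.arg - q.arg) := by
        have hcases : ⌊t⌋ = ⌊u⌋ ∨ (⌊t⌋ = 6 ∧ ⌊u⌋ = 0) ∨ (⌊t⌋ = 0 ∧ ⌊u⌋ = 6) := by omega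
        have hstep : ∀ x y : ℂ, ⌊(x.arg + Real.pi) / (Real.pi / 3)⌋ = 6 →
            ⌊(y.arg + Real.pi) / (Real.pi / 3)⌋ = 0 →
            (y.arg + Real.pi) / (Real.pi / 3) > 0 →
            (x.arg + Real.pi) / (Real.pi / 3) ≤ 6 →
            1/2 < Real.cos (x.arg - y.arg) := by
          intro x y hx6 hy0 hy0' hx6'
          have hxval : (x.arg + Real.pi) / (Real.pi / 3) = 6 := by
            have := Int.floor_le ((x.arg + Real.pi) / (Real.pi / 3))
            rw [hx6] at this
            push_cast at this
            linarith
          have hxarg : x.arg = Real.pi := by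
            have : x.arg + Real.pi = 6 * (Real.pi / 3) := by
              rw [← hxval]; field_simp
            linarith
          have hyval : (y.arg + Real.pi) / (Real.pi / 3) < 1 := by
            have := Int.lt_floor_add_one ((y.arg + Real.pi) / (Real.pi / 3))
            rw [hy0] at this
            push_cast at this
            linarith
          have hyarg : y.arg + Real.pi < Real.pi / 3 := by
            rw [div_lt_iff₀ (by linarith)] at hyval
            linarith
          have hyarg' : -Real.pi < y.arg := Complex.neg_pi_lt_arg y
          have : Real.cos (x.arg - y.arg) = Real.cos (x.arg - y.arg - 2 * Real.pi) := by
            rw [Real.cos_sub_two_pi]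
          rw [this]
          apply cos_gt_half_of_abs_lt
          rw [abs_lt]
          constructor <;> [skip; skip] <;> rw [hxarg] <;> linarith
        rcases hcases with h | ⟨h1, h2⟩ | ⟨h1, h2⟩
        · -- same floor: |t - u| < 1
          have h1 := Int.floor_le t
          have h2 := Int.lt_floor_add_one t
          have h3 := Int.floor_le u
          have h4 := Int.lt_floor_add_one u
          rw [h] at h1 h2
          apply cos_gt_half_of_abs_lt
          have hdiff : p.arg - q.arg = (t - u) * (Real.pi / 3) := by
            rw [sub_mul, harg, harg']; ring
          rw [hdiff, abs_lt]
          have htu : |t - u| < 1 := by rw [abs_lt]; constructor <;> linarith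
          rw [abs_lt] at htu
          constructor <;> nlinarith [htu.1, htu.2]
        · exact hstep p q h1 h2 hu0 ht6
        · have := hstep q p h2 h1 ht0 hu6
          rwa [show q.arg - p.arg = -(p.arg - q.arg) by ring, Real.cos_neg] at this
      -- now derive contradiction from distances
      have hkey := norm_sub_sq_eq p q
      rw [hpq] at hkey
      have hrp : 0 < ‖p‖ := norm_pos_iff.mpr hp0
      have hrq : 0 < ‖q‖ := norm_pos_iff.mpr hq0
      nlinarith [hkey, hcos, hrp, hrq, hp, hq, mul_pos hrp hrq]
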